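/- Let A → A' be a flat ring homomorphism, x ∈ A an element such that A/xA → A'/xA' is an isomorphism. Then the square of ring maps A → A_x, A → A', with pushout maps to A'_x, is a Milnor square in the sense that the natural map A → A' ×_{A'_x} A_x is an isomorphism. -/

import Mathlib

open scoped TensorProduct

theorem aux_flat {A : Type*} [CommRing A] {A' : Type*} [CommRing A'] [Algebra A A']
    [Module.Flat A A'] (r : A) (c : A') (h : algebraMap A A' r * c = 0) :
    c ∈ (LinearMap.ker (LinearMap.toSpanSingleton A A r) : Ideal A) •
      (⊤ : Submodule A A') := by
  set J : Ideal A := LinearMap.ker (LinearMap.toSpanSingleton A A r) with hJ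
  set g : (A ⧸ J) →ₗ[A] A := Submodule.liftQ J (LinearMap.toSpanSingleton A A r) le_rfl with hg
  have hginj : Function.Injective g := by
    rw [← LinearMap.ker_eq_bot, hg, Submodule.ker_liftQ_eq_bot _ _ _ le_rfl]
  have h0 : (r : A) ⊗ₜ[A] c = (0 : A ⊗[A] A') := by
    apply (TensorProduct.lid A A').injective
    simp [Algebra.smul_def, h]
  have hz : (LinearMap.rTensor A' g) ((Submodule.Quotient.mk (1 : A)) ⊗ₜ[A] c) = 0 := by
    rw [LinearMap.rTensor_tmul]
    have : g (Submodule.Quotient.mk (1 : A)) = r := by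
      rw [hg, Submodule.liftQ_apply, LinearMap.toSpanSingleton_apply, one_smul]
    rw [this, h0]
  have hz2 : (Submodule.Quotient.mk (1 : A)) ⊗ₜ[A] c = (0 : (A ⧸ J) ⊗[A] A') :=
    Module.Flat.rTensor_preserves_injective_linearMap g hginj (by simpa using hz)
  have := congrArg (TensorProduct.quotTensorEquivQuotSMul A' J) hz2
  rw [map_zero] at this
  have h1 : (TensorProduct.quotTensorEquivQuotSMul A' J)
      ((Submodule.Quotient.mk (1 : A)) ⊗ₜ[A] c) = Submodule.Quotient.mk ((1:A) • c) :=
    TensorProduct.quotTensorEquivQuotSMul_mk_tmul J 1 c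
  rw [h1] at this
  simpa using (Submodule.Quotient.mk_eq_zero _).mp this

section lemmas

variable {A : Type*} [CommRing A] {A' : Type*} [CommRing A'] [Algebra A A'] (x : A)

/-- surjectivity mod `x^k` -/
theorem aux_surjS (hsurj : ∀ c : A', ∃ d r, c = algebraMap A A' d + algebraMap A A' x * r)
    (k : ℕ) (c : A') :
    ∃ d r, c = algebraMap A A' d + (algebraMap A A' x) ^ k * r := by
  induction k generalizing c with
  | zero => exact ⟨0, c, by simp⟩
  | succ n ih =>
    obtain ⟨d, r, hdr⟩ := ih c
    obtain ⟨d', r', hdr'⟩ := hsurj r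
    exact ⟨d + x ^ n * d', r', by rw [hdr, hdr']; push_cast [map_add, map_mul, map_pow]; ring⟩

/-- key flatness consequence, with approximation mod `x^n` -/
theorem aux_G [Module.Flat A A']
    (hsurj : ∀ c : A', ∃ d r, c = algebraMap A A' d + algebraMap A A' x * r)
    (n : ℕ) (r : A) (c : A') (h : algebraMap A A' r * c = 0) :
    ∃ d s, c = algebraMap A A' d + (algebraMap A A' x) ^ n * s ∧ r * d = 0 := by
  refine Submodule.smul_induction_on (aux_flat r c h) ?_ ?_
  · intro t ht c' _
    obtain ⟨d', s', hds⟩ := aux_surjS x hsurj n c'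
    have htr : t * r = 0 := by simpa [LinearMap.toSpanSingleton_apply, smul_eq_mul] using ht
    refine ⟨t * d', algebraMap A A' t * s', ?_, by linear_combination d' * htr⟩
    rw [Algebra.smul_def, hds, map_mul]; ring
  · rintro y z ⟨d₁, s₁, h₁, h₁'⟩ ⟨d₂, s₂, h₂, h₂'⟩
    exact ⟨d₁ + d₂, s₁ + s₂, by rw [h₁, h₂, map_add]; ring,
      by rw [mul_add, h₁', h₂', add_zero]⟩

/-- torsion of `A'` comes from torsion of `A` -/
theorem aux_K [Module.Flat A A']
    (hsurj : ∀ c : A', ∃ d r, c = algebraMap A A' d + algebraMap A A' x * r)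
    (k : ℕ) (c : A') (h : (algebraMap A A' x) ^ k * c = 0) :
    ∃ t, c = algebraMap A A' t ∧ x ^ k * t = 0 := by
  have h' : algebraMap A A' (x ^ k) * c = 0 := by rwa [map_pow]
  refine Submodule.smul_induction_on (aux_flat (x ^ k) c h') ?_ ?_
  · intro t ht c' _
    obtain ⟨d', s', hds⟩ := aux_surjS x hsurj k c'
    have htx : t * x ^ k = 0 := by simpa [LinearMap.toSpanSingleton_apply, smul_eq_mul] using ht
    refine ⟨t * d', ?_, by linear_combination d' * htx⟩
    rw [Algebra.smul_def, hds, mul_add, map_mul]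
    have : algebraMap A A' t * ((algebraMap A A' x) ^ k * s') = 0 := by
      rw [← mul_assoc, ← map_pow, ← map_mul, htx, map_zero, zero_mul]
    rw [this, add_zero]
  · rintro y z ⟨d₁, h₁, h₁'⟩ ⟨d₂, h₂, h₂'⟩
    exact ⟨d₁ + d₂, by rw [h₁, h₂, map_add], by rw [mul_add, h₁', h₂', add_zero]⟩

/-- injectivity mod powers of x -/
theorem aux_Q [Module.Flat A A']
    (hsurj : ∀ c : A', ∃ d r, c = algebraMap A A' d + algebraMap A A' x * r)
    (hinj : ∀ a : A, (∃ r, algebraMap A A' a = algebraMap A A' x * r) → ∃ e, a = x * e)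
    (n : ℕ) (a : A) (h : ∃ r, algebraMap A A' a = (algebraMap A A' x) ^ n * r) :
    ∃ e, a = x ^ n * e := by
  induction n generalizing a with
  | zero => exact ⟨a, by simp⟩
  | succ n ih =>
    obtain ⟨r, hr⟩ := h
    obtain ⟨a₁, ha₁⟩ := hinj a ⟨(algebraMap A A' x) ^ n * r, by rw [hr, pow_succ]; ring⟩
    have hx1 : algebraMap A A' x * (algebraMap A A' a₁ - (algebraMap A A' x) ^ n * r) = 0 := by
      have : algebraMap A A' x * algebraMap A A' a₁ = algebraMap A A' a := by
        rw [ha₁, map_mul]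
      rw [mul_sub, this, hr, pow_succ]; ring_nf
    obtain ⟨t, ht, ht'⟩ := aux_K x hsurj 1 _ (by rw [pow_one]; exact hx1)
    rw [pow_one] at ht'
    obtain ⟨e, he⟩ := ih (a₁ - t) ⟨r, by rw [map_sub]; linear_combination ht⟩
    refine ⟨e, ?_⟩
    have : a₁ = x ^ n * e + t := by rw [← he]; ring
    rw [ha₁, this, mul_add, ht', pow_succ, add_zero]; ring

end lemmas


/-- Let `A → A'` be a flat ring homomorphism and `x ∈ A` an element such that
`A/xA → A'/xA'` is an isomorphism.  Then the natural map `A → A' ×_{A'_x} A_x` is an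
isomorphism, i.e. the square is a Milnor square: for every `b : A'` and `u : A_x` with the
same image in `A'_x` there is a unique `a : A` mapping to `b` and `u`. -/
theorem stmt6 (A : Type*) [CommRing A] (A' : Type*) [CommRing A'] [Algebra A A']
    [Module.Flat A A'] (x : A)
    (hiso : Function.Bijective
      (Ideal.quotientMap (Ideal.map (algebraMap A A') (Ideal.span {x})) (algebraMap A A')
        Ideal.le_comap_map)) :
    ∀ (b : A') (u : Localization.Away x),
      algebraMap A' (Localization.Away (algebraMap A A' x)) b =
        Localization.awayMapₐ (Algebra.ofId A A') x u →
      ∃! a : A, algebraMap A A' a = b ∧ algebraMap A (Localization.Away x) a = u := by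
  intro b u h
  have hmapspan : Ideal.map (algebraMap A A') (Ideal.span {x}) =
      Ideal.span {algebraMap A A' x} := by
    rw [Ideal.map_span, Set.image_singleton]
  -- surjectivity mod x
  have hsurj : ∀ c : A', ∃ d r, c = algebraMap A A' d + algebraMap A A' x * r := by
    intro c
    obtain ⟨z, hz⟩ := hiso.2 (Ideal.Quotient.mk _ c)
    obtain ⟨d, rfl⟩ := Ideal.Quotient.mk_surjective z
    rw [Ideal.quotientMap_mk, Ideal.Quotient.eq, hmapspan] at hz
    obtain ⟨r, hr⟩ := Ideal.mem_span_singleton'.mp hz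
    exact ⟨d, -r, by linear_combination hr⟩
  -- injectivity mod x
  have hinj : ∀ a : A, (∃ r, algebraMap A A' a = algebraMap A A' x * r) → ∃ e, a = x * e := by
    intro a ⟨r, hr⟩
    have hmem : algebraMap A A' a ∈ Ideal.map (algebraMap A A') (Ideal.span {x}) := by
      rw [hmapspan]
      exact Ideal.mem_span_singleton'.mpr ⟨r, by linear_combination - hr⟩
    have h0 : Ideal.quotientMap (Ideal.map (algebraMap A A') (Ideal.span {x}))
        (algebraMap A A') Ideal.le_comap_map (Ideal.Quotient.mk _ a) =
        Ideal.quotientMap (Ideal.map (algebraMap A A') (Ideal.span {x}))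
        (algebraMap A A') Ideal.le_comap_map (Ideal.Quotient.mk _ 0) := by
      rw [Ideal.quotientMap_mk, Ideal.quotientMap_mk, map_zero, Ideal.Quotient.eq]
      simpa using hmem
    have := hiso.1 h0
    rw [Ideal.Quotient.eq, sub_zero] at this
    obtain ⟨e, he⟩ := Ideal.mem_span_singleton'.mp this
    exact ⟨e, by linear_combination - he⟩
  have hcomm : ∀ z : A, Localization.awayMapₐ (Algebra.ofId A A') x
      (algebraMap A (Localization.Away x) z) =
      algebraMap A' (Localization.Away (algebraMap A A' x)) (algebraMap A A' z) := by
    intro z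
    simp only [Localization.awayMapₐ, IsLocalization.Away.mapₐ_apply, IsLocalization.Away.map]
    exact IsLocalization.map_eq _ z
  obtain ⟨⟨a, s⟩, hu⟩ := IsLocalization.surj (Submonoid.powers x) u
  obtain ⟨n, hn⟩ := s.2
  simp only at hu
  rw [show (s : A) = x ^ n from hn.symm] at hu
  -- transport to the localization of A'
  have h2 : algebraMap A' (Localization.Away (algebraMap A A' x)) (algebraMap A A' x ^ n * b) =
      algebraMap A' (Localization.Away (algebraMap A A' x)) (algebraMap A A' a) := by
    rw [← hcomm a, ← hu, map_mul, map_mul, hcomm (x ^ n), ← h, map_pow, map_pow, map_pow]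
    exact mul_comm _ _
  obtain ⟨c, hc⟩ := (IsLocalization.eq_iff_exists (Submonoid.powers (algebraMap A A' x)) _).mp h2
  obtain ⟨m, hm⟩ := c.2
  rw [show (c : A') = algebraMap A A' x ^ m from hm.symm] at hc
  obtain ⟨a₁, N, hfa1, hu1⟩ : ∃ (a₁ : A) (N : ℕ),
      algebraMap A A' a₁ = algebraMap A A' x ^ N * b ∧
      u * algebraMap A (Localization.Away x) (x ^ N) =
        algebraMap A (Localization.Away x) a₁ := by
    refine ⟨x ^ m * a, n + m, ?_, ?_⟩
    · rw [map_mul, map_pow, pow_add]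
      linear_combination - hc
    · rw [pow_add, map_mul, ← mul_assoc, hu, ← map_mul, mul_comm a (x ^ m)]
  -- construct a₀
  obtain ⟨d, c₁, hdc⟩ := hsurj b
  obtain ⟨e, he⟩ := aux_Q x hsurj hinj (N + 1) (a₁ - x ^ N * d)
    ⟨c₁, by
      simp only [map_sub, map_mul, map_pow]
      linear_combination hfa1 + (algebraMap A A' x) ^ N * hdc⟩
  have h7 := congrArg (algebraMap A A') he
  simp only [map_sub, map_mul, map_pow] at h7
  obtain ⟨t, ht, ht'⟩ := aux_K x hsurj (N + 1) (c₁ - algebraMap A A' e)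
    (by linear_combination h7 - hfa1 - (algebraMap A A' x) ^ N * hdc)
  have hb0 : algebraMap A A' (d + x * e + x * t) = b := by
    simp only [map_add, map_mul]
    rw [hdc]
    linear_combination (-(algebraMap A A' x)) * ht
  have hxN : x ^ N * (d + x * e + x * t) = a₁ := by
    have h4 : x ^ (N + 1) * t = 0 := ht'
    rw [pow_succ] at h4
    have h5 : a₁ - x ^ N * d = x ^ (N + 1) * e := he
    rw [pow_succ] at h5
    linear_combination h4 - h5
  have hu0 : algebraMap A (Localization.Away x) (d + x * e + x * t) = u := by
    have hun : IsUnit (algebraMap A (Localization.Away x) (x ^ N)) :=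
      IsLocalization.map_units _ (⟨x ^ N, N, rfl⟩ : Submonoid.powers x)
    refine hun.mul_right_cancel ?_
    rw [← map_mul, mul_comm (d + x * e + x * t) (x ^ N), hxN, hu1]
  refine ⟨d + x * e + x * t, ⟨hb0, hu0⟩, ?_⟩
  rintro a₂ ⟨hb2, hu2⟩
  have heq : algebraMap A (Localization.Away x) a₂ =
      algebraMap A (Localization.Away x) (d + x * e + x * t) := by rw [hu2, hu0]
  obtain ⟨c', hc'⟩ := (IsLocalization.eq_iff_exists (Submonoid.powers x) _).mp heq
  obtain ⟨k, hk⟩ := c'.2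
  rw [show (c' : A) = x ^ k from hk.symm] at hc'
  have hfδ : algebraMap A A' (a₂ - (d + x * e + x * t)) * 1 = 0 := by
    rw [map_sub, hb2, hb0, sub_self, zero_mul]
  obtain ⟨d₀, s₀, hds₀, hδd₀⟩ := aux_G x hsurj k (a₂ - (d + x * e + x * t)) 1 hfδ
  obtain ⟨e₀, he₀⟩ := aux_Q x hsurj hinj k (1 - d₀)
    ⟨s₀, by rw [map_sub, map_one]; linear_combination hds₀⟩
  have h6 : x ^ k * (a₂ - (d + x * e + x * t)) = 0 := by linear_combination hc'
  have hz : a₂ - (d + x * e + x * t) = 0 := by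
    linear_combination (a₂ - (d + x * e + x * t)) * he₀ + hδd₀ + e₀ * h6
  linear_combination hz
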